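/- arXiv:1709.03147 — 2 statements merged into one kernel-verified Lean document; each statement's English description precedes it below -/
import Mathlib

section
/- Let α, k, t be real numbers with 0 < α < 1, k(1−α) ≥ 2, t > k + 1, and t > 1 + (α/(1−α))·k. Then (t−1−kα)/(k(1−α)) − 1 < (t−1)(t−2)/(k(k−1)) − 1; equivalently, (t−1−kα)/(k(1−α)) < (t−1)(t−2)/(k(k−1)). (This is the case of Lemma 2 where type_uvw = 3 and t^(3)_uvw > 1 + (α/(1−α))k: the per-triangle variance under WRS is strictly smaller than under Triest-IMPR.) -/
/-- Type-3 case of Lemma 2 (with `t > 1 + (α/(1−α))k`): the per-triangle variance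
under WRS is strictly smaller than under Triest-IMPR. -/
theorem wrs_type3_variance_comparison_largeT (α k t : ℝ)
    (hα0 : 0 < α) (hα1 : α < 1) (hk : k * (1 - α) ≥ 2)
    (ht : t > k + 1) (ht' : t > 1 + (α / (1 - α)) * k) :
    (t - 1 - k * α) / (k * (1 - α)) - 1 < (t - 1) * (t - 2) / (k * (k - 1)) - 1 ∧
    (t - 1 - k * α) / (k * (1 - α)) < (t - 1) * (t - 2) / (k * (k - 1)) := by
  have h1α : 0 < 1 - α := by linarith
  have hk2 : k > 2 := by nlinarith
  have hd1 : 0 < k * (1 - α) := by linarith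
  have hd2 : 0 < k * (k - 1) := by nlinarith
  have key : (t - 1 - k * α) / (k * (1 - α)) < (t - 1) * (t - 2) / (k * (k - 1)) := by
    rw [div_lt_div_iff₀ hd1 hd2]
    have hA : α * k < (t - 1) * (1 - α) := by
      have heq : α / (1 - α) * k = α * k / (1 - α) := div_mul_eq_mul_div α (1 - α) k
      have h2 : α * k / (1 - α) < t - 1 := by rw [← heq]; linarith
      calc α * k = α * k / (1 - α) * (1 - α) := by field_simp
        _ < (t - 1) * (1 - α) := mul_lt_mul_of_pos_right h2 h1α
    nlinarith [mul_pos (mul_pos (show (0:ℝ) < t - 1 - k by linarith)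
      (show (0:ℝ) < (t - 1) * (1 - α) - α * (k - 1) by nlinarith)) (show (0:ℝ) < k by linarith)]
  exact ⟨by linarith, key⟩
end

section
/- Let α, k, t be real numbers with 0 < α < 1/2, k(1−α) ≥ 2, and t > k + 1. Then (t−1−kα)/(k(1−α)) − 1 < (t−1)(t−2)/(k(k−1)) − 1; equivalently, (t−1−kα)/(k(1−α)) < (t−1)(t−2)/(k(k−1)). (This is the case of Lemma 2 where type_uvw = 3 and α < 0.5: the per-triangle variance under WRS is strictly smaller than under Triest-IMPR.) -/
/-- Type-3 case of Lemma 2 (with `α < 0.5`): the per-triangle variance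
under WRS is strictly smaller than under Triest-IMPR. -/
theorem wrs_type3_variance_comparison_smallAlpha (α k t : ℝ)
    (hα0 : 0 < α) (hα1 : α < 1 / 2) (hk : k * (1 - α) ≥ 2) (ht : t > k + 1) :
    (t - 1 - k * α) / (k * (1 - α)) - 1 < (t - 1) * (t - 2) / (k * (k - 1)) - 1 ∧
    (t - 1 - k * α) / (k * (1 - α)) < (t - 1) * (t - 2) / (k * (k - 1)) := by
  have h1 : (0:ℝ) < 1 - α := by linarith
  have hk2 : k > 2 := by nlinarith
  have hd1 : (0:ℝ) < k * (1 - α) := by linarith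
  have hd2 : (0:ℝ) < k * (k - 1) := by nlinarith
  have key : (t - 1 - k * α) / (k * (1 - α)) < (t - 1) * (t - 2) / (k * (k - 1)) := by
    rw [div_lt_div_iff₀ hd1 hd2]
    have hs : 0 < t - k - 1 := by linarith
    have h12 : 0 < 1 - 2 * α := by linarith
    have hkp : (0:ℝ) < k := by linarith
    nlinarith [mul_pos (mul_pos hkp (mul_pos hs hs)) h1,
      mul_pos (mul_pos (mul_pos hkp hkp) hs) h12,
      mul_pos (mul_pos hkp hs) hα0]
  exact ⟨by linarith, key⟩
end
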